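/- Let H be a complex Hilbert space of dimension at least 2 (possibly infinite) and let (S(U), ρ_V^U) be a complete presheaf of sets on L(H) such that S(U) is nonempty for every U ∈ L(H). Then for every U ∈ L(H) with U ≠ 0, the set S(U) has exactly one element. -/

import Mathlib

/-- The lattice `L(H)` of closed subspaces of the Hilbert space `H`,
ordered by inclusion. -/
abbrev ClosedSub (H : Type*) [NormedAddCommGroup H] [InnerProductSpace ℂ H] : Type _ :=
  {U : Submodule ℂ H // IsClosed (U : Set H)}

variable {H : Type*} [NormedAddCommGroup H] [InnerProductSpace ℂ H]

instance : Bot (ClosedSub H) :=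
  ⟨⟨⊥, by rw [Submodule.bot_coe]; exact isClosed_singleton⟩⟩

/-- The meet of two closed subspaces is their intersection. -/
instance : Min (ClosedSub H) := ⟨fun U V => ⟨U.1 ⊓ V.1, U.2.inter V.2⟩⟩

/-- The join of a family of closed subspaces: the closed linear span of their union. -/
noncomputable def ClosedSub.famSup {ι : Type} (a : ι → ClosedSub H) : ClosedSub H :=
  ⟨(⨆ i, (a i).1).topologicalClosure, Submodule.isClosed_topologicalClosure _⟩

theorem ClosedSub.le_famSup {ι : Type} (a : ι → ClosedSub H) (i : ι) :
    a i ≤ ClosedSub.famSup a := by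
  change (a i).1 ≤ (⨆ i, (a i).1).topologicalClosure
  exact le_trans (le_iSup (fun i => (a i).1) i) (Submodule.le_topologicalClosure _)

theorem ClosedSub.inf_le_left' (U V : ClosedSub H) : U ⊓ V ≤ U := by
  change U.1 ⊓ V.1 ≤ U.1; exact inf_le_left

theorem ClosedSub.inf_le_right' (U V : ClosedSub H) : U ⊓ V ≤ V := by
  change U.1 ⊓ V.1 ≤ V.1; exact inf_le_right


section AuxGeometry

open Submodule Set

local notation "⟪" x ", " y "⟫" => @inner ℂ _ _ x y

variable {H : Type*} [NormedAddCommGroup H] [InnerProductSpace ℂ H]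

private lemma mem_orth_of_forall {s : Set H} {x : H} (h : ∀ y ∈ s, ⟪y, x⟫ = 0) :
    x ∈ (span ℂ s)ᗮ := by
  rw [Submodule.mem_orthogonal]
  intro u hu
  induction hu using Submodule.span_induction with
  | mem y hy => exact h y hy
  | zero => simp
  | add a b _ _ ha hb => rw [inner_add_left, ha, hb, add_zero]
  | smul c a _ ha => rw [inner_smul_left, ha, mul_zero]

private lemma orth_topologicalClosure (K : Submodule ℂ H) :
    K.topologicalClosureᗮ = Kᗮ := by
  refine le_antisymm (Submodule.orthogonal_le K.le_topologicalClosure) ?_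
  intro x hx
  rw [Submodule.mem_orthogonal]
  intro u hu
  rw [inner_eq_zero_symm]
  have hsub : (K : Set H) ⊆ {y | ⟪x, y⟫ = 0} := fun y hy =>
    Submodule.inner_left_of_mem_orthogonal hy hx
  have hcl : IsClosed {y : H | ⟪x, y⟫ = 0} :=
    isClosed_eq (Continuous.inner continuous_const continuous_id) continuous_const
  have hU : (K.topologicalClosure : Set H) ⊆ {y | ⟪x, y⟫ = 0} := by
    rw [Submodule.topologicalClosure_coe]
    exact closure_minimal hsub hcl
  exact hU hu

private lemma closure_le_orth {s t : Set H} (h : ∀ y ∈ s, ∀ z ∈ t, ⟪y, z⟫ = 0) :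
    (span ℂ t).topologicalClosure ≤ (span ℂ s)ᗮ :=
  Submodule.topologicalClosure_minimal _
    (Submodule.span_le.2 fun z hz => mem_orth_of_forall fun y hy => h y hy z hz)
    (span ℂ s).isClosed_orthogonal

private lemma orth_inner_eq_zero {s : Set H} {x y : H} (hx : x ∈ (span ℂ s)ᗮ) (hy : y ∈ s) :
    ⟪y, x⟫ = 0 :=
  Submodule.inner_right_of_mem_orthogonal (Submodule.subset_span hy) hx

private lemma eq_zero_of_closure_orth {s : Set H} {x : H}
    (hx : x ∈ (span ℂ s).topologicalClosure) (ho : x ∈ (span ℂ s)ᗮ) : x = 0 := by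
  rw [← orth_topologicalClosure (span ℂ s)] at ho
  exact inner_self_eq_zero.1 (Submodule.inner_right_of_mem_orthogonal hx ho)

private lemma span_pair_inf {u w : H} (h : ∀ a b : ℂ, a • u + b • w = 0 → a = 0 ∧ b = 0) :
    span ℂ {u} ⊓ span ℂ {w} = ⊥ := by
  rw [eq_bot_iff]
  intro z hz
  obtain ⟨hz1, hz2⟩ := Submodule.mem_inf.1 hz
  obtain ⟨a, ha⟩ := Submodule.mem_span_singleton.1 hz1
  obtain ⟨b, hb⟩ := Submodule.mem_span_singleton.1 hz2
  have h0 : a • u + (-b) • w = 0 := by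
    rw [neg_smul, ha, hb]
    exact add_neg_cancel z
  have ha0 := (h a (-b) h0).1
  rw [Submodule.mem_bot, ← ha, ha0, zero_smul]

end AuxGeometry

section AuxPresheaf

open Submodule Set

local notation "⟪" x ", " y "⟫" => @inner ℂ _ _ x y

variable {H : Type*} [NormedAddCommGroup H] [InnerProductSpace ℂ H]
variable {S : ClosedSub H → Type*}

private lemma inf_comm' (U V : ClosedSub H) : U ⊓ V = V ⊓ U := Subtype.ext (inf_comm _ _)

private lemma famSup_eq_of_closure {ι : Type} (a : ι → ClosedSub H) (U : ClosedSub H)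
    (h : (⨆ i, (a i).1).topologicalClosure = U.1) : ClosedSub.famSup a = U := Subtype.ext h

private def pairFam (V W : ClosedSub H) : Bool → ClosedSub H := fun b => bif b then V else W

private def tripFam (V W X : ClosedSub H) : Option Bool → ClosedSub H :=
  fun o => o.elim X (pairFam V W)

private def pairDat {V W : ClosedSub H} (v0 : S V) (w0 : S W) : ∀ b, S (pairFam V W b) :=
  fun b => match b with
  | true => v0
  | false => w0

private def tripDat {V W X : ClosedSub H} (v0 : S V) (w0 : S W) (x : S X) :
    ∀ o, S (tripFam V W X o) :=
  fun o => match o with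
  | none => x
  | some b => pairDat v0 w0 b

variable (ρ : ∀ {U V : ClosedSub H}, V ≤ U → S U → S V)

private lemma castρ {P Q : ClosedSub H} (h : P = Q) {Z : ClosedSub H} (h1 : Z ≤ P) (h2 : Z ≤ Q)
    (g : S P) : ρ h2 (cast (congrArg S h) g) = ρ h1 g := by subst h; rfl

private lemma key
    (hglue : ∀ {ι : Type} (a : ι → ClosedSub H) (f : ∀ i, S (a i)),
      (∀ i j : ι, a i ⊓ a j ≠ ⊥ →
        ρ (ClosedSub.inf_le_left' (a i) (a j)) (f i) =
          ρ (ClosedSub.inf_le_right' (a i) (a j)) (f j)) →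
      ∃! g : S (ClosedSub.famSup a), ∀ i, ρ (ClosedSub.le_famSup a i) g = f i)
    {V W X : ClosedSub H} (v0 : S V) (w0 : S W)
    (hVW : V ⊓ W = ⊥) (hVX : V ⊓ X = ⊥) (hWX : W ⊓ X = ⊥)
    (hX : X.1 ≤ (V.1 ⊔ W.1).topologicalClosure) (x y : S X) : x = y := by
  have hXV : X ⊓ V = ⊥ := (inf_comm' X V).trans hVX
  have hXW : X ⊓ W = ⊥ := (inf_comm' X W).trans hWX
  have hWV : W ⊓ V = ⊥ := (inf_comm' W V).trans hVW
  have hsup : ClosedSub.famSup (tripFam V W X) = ClosedSub.famSup (pairFam V W) := by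
    apply Subtype.ext
    show (⨆ o, (tripFam V W X o).1).topologicalClosure
        = (⨆ b, (pairFam V W b).1).topologicalClosure
    have h2 : (⨆ b, (pairFam V W b).1) = V.1 ⊔ W.1 := by
      rw [iSup_bool_eq]; rfl
    have h3 : (⨆ o, (tripFam V W X o).1) = X.1 ⊔ (V.1 ⊔ W.1) := by
      rw [iSup_option fun o => (tripFam V W X o).1]
      show X.1 ⊔ (⨆ b, (pairFam V W b).1) = _
      rw [h2]
    rw [h2, h3]
    refine le_antisymm ?_ ?_
    · exact Submodule.topologicalClosure_minimal _
        (sup_le hX (Submodule.le_topologicalClosure _))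
        (Submodule.isClosed_topologicalClosure _)
    · exact Submodule.topologicalClosure_mono le_sup_right
  have pc : ∀ i j : Bool, pairFam V W i ⊓ pairFam V W j ≠ ⊥ →
      ρ (ClosedSub.inf_le_left' (pairFam V W i) (pairFam V W j)) (pairDat (S := S) v0 w0 i) =
        ρ (ClosedSub.inf_le_right' (pairFam V W i) (pairFam V W j)) (pairDat v0 w0 j) := by
    intro i j hij
    match i, j with
    | true, true => rfl
    | false, false => rfl
    | true, false => exact absurd hVW hij
    | false, true => exact absurd hWV hij
  have tc : ∀ (z : S X), ∀ i j : Option Bool,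
      tripFam V W X i ⊓ tripFam V W X j ≠ ⊥ →
      ρ (ClosedSub.inf_le_left' (tripFam V W X i) (tripFam V W X j))
          (tripDat (S := S) v0 w0 z i) =
        ρ (ClosedSub.inf_le_right' (tripFam V W X i) (tripFam V W X j)) (tripDat v0 w0 z j) := by
    intro z i j hij
    match i, j with
    | none, none => rfl
    | some true, some true => rfl
    | some false, some false => rfl
    | none, some true => exact absurd hXV hij
    | none, some false => exact absurd hXW hij
    | some true, none => exact absurd hVX hij
    | some false, none => exact absurd hWX hij
    | some true, some false => exact absurd hVW hij
    | some false, some true => exact absurd hWV hij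
  obtain ⟨g, hg, -⟩ := hglue (tripFam V W X) (tripDat v0 w0 x) (tc x)
  obtain ⟨g', hg', -⟩ := hglue (tripFam V W X) (tripDat v0 w0 y) (tc y)
  obtain ⟨h, -, hu⟩ := hglue (pairFam V W) (pairDat v0 w0) pc
  have hcast : ∀ (z : S X) (g0 : S (ClosedSub.famSup (tripFam V W X))),
      (∀ o, ρ (ClosedSub.le_famSup (tripFam V W X) o) g0 = tripDat (S := S) v0 w0 z o) →
      cast (congrArg S hsup) g0 = h := by
    intro z g0 hgz
    refine hu _ fun b => ?_
    match b with
    | true =>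
      refine (castρ (ρ := ρ) hsup (ClosedSub.le_famSup (tripFam V W X) (some true)) _ g0).trans ?_
      exact hgz (some true)
    | false =>
      refine (castρ (ρ := ρ) hsup (ClosedSub.le_famSup (tripFam V W X) (some false)) _ g0).trans ?_
      exact hgz (some false)
  have hcc : cast (congrArg S hsup) g = cast (congrArg S hsup) g' :=
    (hcast x g hg).trans (hcast y g' hg').symm
  have hgg : g = g' := (cast_inj _).1 hcc
  have h1 : ρ (ClosedSub.le_famSup (tripFam V W X) none) g = x := hg none
  have h2 : ρ (ClosedSub.le_famSup (tripFam V W X) none) g' = y := hg' none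
  rw [← h1, ← h2, hgg]

private lemma joinP
    (hcomp : ∀ {U V W : ClosedSub H} (hWV : W ≤ V) (hVU : V ≤ U) (f : S U),
      ρ hWV (ρ hVU f) = ρ (hWV.trans hVU) f)
    (hglue : ∀ {ι : Type} (a : ι → ClosedSub H) (f : ∀ i, S (a i)),
      (∀ i j : ι, a i ⊓ a j ≠ ⊥ →
        ρ (ClosedSub.inf_le_left' (a i) (a j)) (f i) =
          ρ (ClosedSub.inf_le_right' (a i) (a j)) (f j)) →
      ∃! g : S (ClosedSub.famSup a), ∀ i, ρ (ClosedSub.le_famSup a i) g = f i)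
    {ι : Type} (a : ι → ClosedSub H)
    (hsub : ∀ i (p q : S (a i)), p = q)
    (x y : S (ClosedSub.famSup a)) : x = y := by
  obtain ⟨h, -, hu⟩ := hglue a (fun i => ρ (ClosedSub.le_famSup a i) x)
    (by intro i j _; rw [hcomp, hcomp])
  have hx := hu x fun i => rfl
  have hy := hu y fun i => hsub i _ _
  rw [hx, hy]

private lemma line_case (hdim : 2 ≤ Module.rank ℂ H)
    (hglue : ∀ {ι : Type} (a : ι → ClosedSub H) (f : ∀ i, S (a i)),
      (∀ i j : ι, a i ⊓ a j ≠ ⊥ →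
        ρ (ClosedSub.inf_le_left' (a i) (a j)) (f i) =
          ρ (ClosedSub.inf_le_right' (a i) (a j)) (f j)) →
      ∃! g : S (ClosedSub.famSup a), ∀ i, ρ (ClosedSub.le_famSup a i) g = f i)
    (hne : ∀ U : ClosedSub H, Nonempty (S U))
    (X : ClosedSub H) (x : H) (hx : x ≠ 0) (hX : X.1 = span ℂ {x})
    (s t : S X) : s = t := by
  have hexy : ∃ y, y ∉ span ℂ {x} := by
    by_contra hcon
    push_neg at hcon
    have h1 : Module.rank ℂ H ≤ 1 := by
      rw [← rank_top ℂ H]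
      refine le_trans (Submodule.rank_mono (fun z _ => hcon z)) ?_
      refine le_trans (rank_span_le ({x} : Set H)) ?_
      simp
    have h2 := hdim.trans h1
    norm_num at h2
  obtain ⟨y, hy⟩ := hexy
  have hind : ∀ a b : ℂ, a • x + b • y = 0 → a = 0 ∧ b = 0 := by
    intro a b hab
    by_cases hb : b = 0
    · subst hb
      rw [zero_smul, add_zero] at hab
      exact ⟨(smul_eq_zero.1 hab).resolve_right hx, rfl⟩
    · exfalso
      apply hy
      rw [Submodule.mem_span_singleton]
      refine ⟨-b⁻¹ * a, ?_⟩
      have h2 : a • x = -(b • y) := eq_neg_of_add_eq_zero_left hab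
      rw [mul_smul, h2, neg_smul, smul_neg, neg_neg, smul_smul, inv_mul_cancel₀ hb, one_smul]
  have hcV : IsClosed ((span ℂ {x + y} : Submodule ℂ H) : Set H) :=
    Submodule.closed_of_finiteDimensional _
  have hcW : IsClosed ((span ℂ {x - y} : Submodule ℂ H) : Set H) :=
    Submodule.closed_of_finiteDimensional _
  set V : ClosedSub H := ⟨span ℂ {x + y}, hcV⟩ with hVdef
  set W : ClosedSub H := ⟨span ℂ {x - y}, hcW⟩ with hWdef
  have hVW : V ⊓ W = ⊥ := by
    apply Subtype.ext
    show (span ℂ {x + y} : Submodule ℂ H) ⊓ span ℂ {x - y} = ⊥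
    refine span_pair_inf fun a b hab => ?_
    have hab' : (a + b) • x + (a - b) • y = 0 := by
      have hrw : (a + b) • x + (a - b) • y = a • (x + y) + b • (x - y) := by module
      rw [hrw, hab]
    obtain ⟨h1, h2⟩ := hind _ _ hab'
    exact ⟨by linear_combination (h1 + h2) / 2, by linear_combination (h1 - h2) / 2⟩
  have hVX : V ⊓ X = ⊥ := by
    apply Subtype.ext
    show (span ℂ {x + y} : Submodule ℂ H) ⊓ X.1 = ⊥
    rw [hX]
    refine span_pair_inf fun a b hab => ?_
    have hab' : (a + b) • x + a • y = 0 := by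
      have hrw : (a + b) • x + a • y = a • (x + y) + b • x := by module
      rw [hrw, hab]
    obtain ⟨h1, h2⟩ := hind _ _ hab'
    exact ⟨h2, by linear_combination h1 - h2⟩
  have hWX : W ⊓ X = ⊥ := by
    apply Subtype.ext
    show (span ℂ {x - y} : Submodule ℂ H) ⊓ X.1 = ⊥
    rw [hX]
    refine span_pair_inf fun a b hab => ?_
    have hab' : (a + b) • x + (-a) • y = 0 := by
      have hrw : (a + b) • x + (-a) • y = a • (x - y) + b • x := by module
      rw [hrw, hab]
    obtain ⟨h1, h2⟩ := hind _ _ hab'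
    exact ⟨by linear_combination -h2, by linear_combination h1 + h2⟩
  have hXle : X.1 ≤ (V.1 ⊔ W.1).topologicalClosure := by
    rw [hX, Submodule.span_le, Set.singleton_subset_iff]
    have hmem0 : (x + y) + (x - y) ∈ V.1 ⊔ W.1 :=
      Submodule.add_mem_sup (Submodule.mem_span_singleton_self _)
        (Submodule.mem_span_singleton_self _)
    have hsm := Submodule.smul_mem (V.1 ⊔ W.1) ((2 : ℂ)⁻¹) hmem0
    have hsum : ((x + y) + (x - y)) = (2 : ℂ) • x := by module
    rw [hsum, smul_smul, inv_mul_cancel₀ (by norm_num : (2:ℂ) ≠ 0), one_smul] at hsm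
    exact Submodule.le_topologicalClosure _ hsm
  exact key ρ hglue (hne V).some (hne W).some hVW hVX hWX hXle s t

end AuxPresheaf

section AuxMain

open Submodule Set

local notation "⟪" x ", " y "⟫" => @inner ℂ _ _ x y

variable {H : Type*} [NormedAddCommGroup H] [InnerProductSpace ℂ H]
variable {S : ClosedSub H → Type*}
variable (ρ : ∀ {U V : ClosedSub H}, V ≤ U → S U → S V)

private lemma subsing [CompleteSpace H] (hdim : 2 ≤ Module.rank ℂ H)
    (hcomp : ∀ {U V W : ClosedSub H} (hWV : W ≤ V) (hVU : V ≤ U) (f : S U),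
      ρ hWV (ρ hVU f) = ρ (hWV.trans hVU) f)
    (hglue : ∀ {ι : Type} (a : ι → ClosedSub H) (f : ∀ i, S (a i)),
      (∀ i j : ι, a i ⊓ a j ≠ ⊥ →
        ρ (ClosedSub.inf_le_left' (a i) (a j)) (f i) =
          ρ (ClosedSub.inf_le_right' (a i) (a j)) (f j)) →
      ∃! g : S (ClosedSub.famSup a), ∀ i, ρ (ClosedSub.le_famSup a i) g = f i)
    (hne : ∀ U : ClosedSub H, Nonempty (S U))
    (U : ClosedSub H) (s t : S U) : s = t := by
  classical
  by_cases hfd : FiniteDimensional ℂ U.1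
  · -- finite dimensional case: U is the join of finitely many lines
    haveI := hfd
    set bas := Module.finBasis ℂ U.1 with hbas
    set afin : Fin (Module.finrank ℂ U.1) → ClosedSub H :=
      fun i => ⟨span ℂ {(bas i : H)}, Submodule.closed_of_finiteDimensional _⟩ with hafin
    have hfs : ClosedSub.famSup afin = U := by
      refine famSup_eq_of_closure afin U ?_
      have h1 : (⨆ i, (afin i).1) = U.1 := by
        show (⨆ i, span ℂ {(bas i : H)}) = U.1
        rw [← Submodule.span_range_eq_iSup]
        have h2 : Set.range (fun i => (bas i : H)) = (U.1.subtype) '' Set.range bas := by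
          rw [← Set.range_comp]; rfl
        rw [h2, Submodule.span_image, Module.Basis.span_eq, Submodule.map_subtype_top]
      rw [h1]
      exact U.2.submodule_topologicalClosure_eq
    have hsub : ∀ i, ∀ (p q : S (afin i)), p = q := by
      intro i p q
      refine line_case ρ hdim hglue hne (afin i) (bas i : H) ?_ rfl p q
      intro h0
      exact Module.Basis.ne_zero bas i (ZeroMemClass.coe_eq_zero.1 h0)
    have := joinP ρ hcomp hglue afin hsub
      (cast (congrArg S hfs.symm) s) (cast (congrArg S hfs.symm) t)
    exact (cast_inj _).1 this
  · -- infinite dimensional case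
    haveI : CompleteSpace U.1 := U.2.completeSpace_coe
    obtain ⟨w, b, hb⟩ := exists_hilbertBasis ℂ U.1
    have hdenseb : (span ℂ (Set.range ⇑b)).topologicalClosure = (⊤ : Submodule ℂ U.1) :=
      b.dense_span
    haveI hinfw : Infinite w := by
      by_contra hninf
      haveI : Finite w := not_infinite_iff_finite.1 hninf
      apply hfd
      have hfdspan : FiniteDimensional ℂ (span ℂ (Set.range ⇑b)) :=
        FiniteDimensional.span_of_finite ℂ (Set.finite_range _)
      have hclosed : IsClosed ((span ℂ (Set.range ⇑b) : Submodule ℂ U.1) : Set U.1) :=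
        Submodule.closed_of_finiteDimensional _
      have htop : span ℂ (Set.range ⇑b) = (⊤ : Submodule ℂ U.1) := by
        rw [← hdenseb, hclosed.submodule_topologicalClosure_eq]
      rw [htop] at hfdspan
      exact LinearEquiv.finiteDimensional (Submodule.topEquiv (R := ℂ) (M := U.1))
    have hcard : Cardinal.mk (w ⊕ w) = Cardinal.mk w := by
      simp [Cardinal.mk_sum, Cardinal.add_eq_self (Cardinal.infinite_iff.1 hinfw)]
    obtain ⟨e⟩ := Cardinal.eq.1 hcard
    set v : w ⊕ w → H := fun i => ((b (e i) : U.1) : H) with hvdef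
    have hveq : v = (Subtype.val : U.1 → H) ∘ (⇑b ∘ ⇑e) := rfl
    have hv : Orthonormal ℂ v :=
      ((b.orthonormal.comp ⇑e e.injective).comp_linearIsometry U.1.subtypeₗᵢ)
    have hvi : ∀ i j, ⟪v i, v j⟫ = if i = j then (1 : ℂ) else 0 := orthonormal_iff_ite.1 hv
    set u1 : w → H := v ∘ Sum.inl with hu1
    set u2 : w → H := v ∘ Sum.inr with hu2
    have h11 : ∀ i j : w, ⟪u1 i, u1 j⟫ = if i = j then 1 else 0 := fun i j => by
      simpa [hu1, hu2] using hvi (Sum.inl i) (Sum.inl j)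
    have h22 : ∀ i j : w, ⟪u2 i, u2 j⟫ = if i = j then 1 else 0 := fun i j => by
      simpa [hu1, hu2] using hvi (Sum.inr i) (Sum.inr j)
    have h12 : ∀ i j : w, ⟪u1 i, u2 j⟫ = 0 := fun i j => by
      simpa [hu1, hu2] using hvi (Sum.inl i) (Sum.inr j)
    have h21 : ∀ i j : w, ⟪u2 i, u1 j⟫ = 0 := fun i j => by
      simpa [hu1, hu2] using hvi (Sum.inr i) (Sum.inl j)
    set MA : Submodule ℂ H := span ℂ (Set.range u1) with hMA
    set MB : Submodule ℂ H := span ℂ (Set.range u2) with hMB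
    set MP : Submodule ℂ H := span ℂ (Set.range fun i => u1 i + u2 i) with hMP
    set MQ : Submodule ℂ H := span ℂ (Set.range fun i => u1 i - u2 i) with hMQ
    set Mv : Submodule ℂ H := span ℂ (Set.range v) with hMv
    set A : ClosedSub H := ⟨MA.topologicalClosure, Submodule.isClosed_topologicalClosure _⟩
      with hA
    set B : ClosedSub H := ⟨MB.topologicalClosure, Submodule.isClosed_topologicalClosure _⟩
      with hB
    set VV : ClosedSub H := ⟨MP.topologicalClosure, Submodule.isClosed_topologicalClosure _⟩
      with hVV
    set WW : ClosedSub H := ⟨MQ.topologicalClosure, Submodule.isClosed_topologicalClosure _⟩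
      with hWW
    -- a vector of the closed span of an orthonormal family all whose coefficients vanish is 0
    have hzero : ∀ z : H, z ∈ Mv.topologicalClosure → (∀ i, ⟪v i, z⟫ = 0) → z = 0 := by
      intro z hz hall
      exact eq_zero_of_closure_orth hz (mem_orth_of_forall (by rintro _ ⟨i, rfl⟩; exact hall i))
    -- memberships in the closure of the total span
    have hMAle : MA.topologicalClosure ≤ Mv.topologicalClosure :=
      Submodule.topologicalClosure_mono (Submodule.span_le.2 (by
        rintro _ ⟨i, rfl⟩; exact Submodule.subset_span ⟨Sum.inl i, rfl⟩))
    have hMBle : MB.topologicalClosure ≤ Mv.topologicalClosure :=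
      Submodule.topologicalClosure_mono (Submodule.span_le.2 (by
        rintro _ ⟨i, rfl⟩; exact Submodule.subset_span ⟨Sum.inr i, rfl⟩))
    have hMPle : MP.topologicalClosure ≤ Mv.topologicalClosure :=
      Submodule.topologicalClosure_mono (Submodule.span_le.2 (by
        rintro _ ⟨i, rfl⟩
        exact Submodule.add_mem _ (Submodule.subset_span ⟨Sum.inl i, rfl⟩)
          (Submodule.subset_span ⟨Sum.inr i, rfl⟩)))
    -- vanishing of coefficients
    have hvan : ∀ (sg tg : Set H), (∀ p ∈ sg, ∀ q ∈ tg, ⟪p, q⟫ = 0) →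
        ∀ z ∈ (span ℂ tg).topologicalClosure, ∀ p ∈ sg, ⟪p, z⟫ = 0 := by
      intro sg tg hst z hz p hp
      exact orth_inner_eq_zero (closure_le_orth hst hz) hp
    have hvanA : ∀ z ∈ MA.topologicalClosure, ∀ j, ⟪u2 j, z⟫ = 0 := by
      intro z hz j
      refine hvan (Set.range u2) (Set.range u1) ?_ z hz (u2 j) ⟨j, rfl⟩
      rintro _ ⟨i, rfl⟩ _ ⟨k, rfl⟩
      exact h21 i k
    have hvanB : ∀ z ∈ MB.topologicalClosure, ∀ j, ⟪u1 j, z⟫ = 0 := by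
      intro z hz j
      refine hvan (Set.range u1) (Set.range u2) ?_ z hz (u1 j) ⟨j, rfl⟩
      rintro _ ⟨i, rfl⟩ _ ⟨k, rfl⟩
      exact h12 i k
    have hvanP : ∀ z ∈ MP.topologicalClosure, ∀ j, ⟪u1 j - u2 j, z⟫ = 0 := by
      intro z hz j
      refine hvan (Set.range fun i => u1 i - u2 i) (Set.range fun i => u1 i + u2 i) ?_
        z hz (u1 j - u2 j) ⟨j, rfl⟩
      rintro _ ⟨i, rfl⟩ _ ⟨k, rfl⟩
      rw [inner_sub_left, inner_add_right, inner_add_right, h11, h12, h21, h22]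
      by_cases hik : i = k <;> simp [hik]
    have hvanQ : ∀ z ∈ MQ.topologicalClosure, ∀ j, ⟪u1 j + u2 j, z⟫ = 0 := by
      intro z hz j
      refine hvan (Set.range fun i => u1 i + u2 i) (Set.range fun i => u1 i - u2 i) ?_
        z hz (u1 j + u2 j) ⟨j, rfl⟩
      rintro _ ⟨i, rfl⟩ _ ⟨k, rfl⟩
      rw [inner_add_left, inner_sub_right, inner_sub_right, h11, h12, h21, h22]
      by_cases hik : i = k <;> simp [hik]
    -- the disjointness facts
    have hdisj : ∀ (P Q : ClosedSub H), (∀ z, z ∈ P.1 → z ∈ Q.1 → z = 0) → P ⊓ Q = ⊥ := by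
      intro P Q h
      apply Subtype.ext
      show P.1 ⊓ Q.1 = ⊥
      rw [eq_bot_iff]
      intro z hz
      obtain ⟨hz1, hz2⟩ := Submodule.mem_inf.1 hz
      exact (Submodule.mem_bot ℂ).2 (h z hz1 hz2)
    have ddVW : VV ⊓ WW = ⊥ := by
      refine hdisj VV WW fun z hzV hzW => ?_
      have c1 : ∀ j, ⟪u1 j, z⟫ = 0 ∧ ⟪u2 j, z⟫ = 0 := by
        intro j
        have hp := hvanQ z hzW j
        have hq := hvanP z hzV j
        rw [inner_add_left] at hp
        rw [inner_sub_left] at hq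
        exact ⟨by linear_combination (hp + hq) / 2, by linear_combination (hp - hq) / 2⟩
      refine hzero z (hMPle hzV) ?_
      rintro (i | i)
      · exact (c1 i).1
      · exact (c1 i).2
    have ddVA : VV ⊓ A = ⊥ := by
      refine hdisj VV A fun z hzV hzA => ?_
      have c2 : ∀ j, ⟪u2 j, z⟫ = 0 := hvanA z hzA
      have c1 : ∀ j, ⟪u1 j, z⟫ = 0 := by
        intro j
        have hq := hvanP z hzV j
        rw [inner_sub_left, c2 j, sub_zero] at hq
        exact hq
      refine hzero z (hMAle hzA) ?_
      rintro (i | i)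
      · exact c1 i
      · exact c2 i
    have ddWA : WW ⊓ A = ⊥ := by
      refine hdisj WW A fun z hzW hzA => ?_
      have c2 : ∀ j, ⟪u2 j, z⟫ = 0 := hvanA z hzA
      have c1 : ∀ j, ⟪u1 j, z⟫ = 0 := by
        intro j
        have hq := hvanQ z hzW j
        rw [inner_add_left, c2 j, add_zero] at hq
        exact hq
      refine hzero z (hMAle hzA) ?_
      rintro (i | i)
      · exact c1 i
      · exact c2 i
    have ddVB : VV ⊓ B = ⊥ := by
      refine hdisj VV B fun z hzV hzB => ?_
      have c1 : ∀ j, ⟪u1 j, z⟫ = 0 := hvanB z hzB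
      have c2 : ∀ j, ⟪u2 j, z⟫ = 0 := by
        intro j
        have hq := hvanP z hzV j
        rw [inner_sub_left, c1 j, zero_sub, neg_eq_zero] at hq
        exact hq
      refine hzero z (hMBle hzB) ?_
      rintro (i | i)
      · exact c1 i
      · exact c2 i
    have ddWB : WW ⊓ B = ⊥ := by
      refine hdisj WW B fun z hzW hzB => ?_
      have c1 : ∀ j, ⟪u1 j, z⟫ = 0 := hvanB z hzB
      have c2 : ∀ j, ⟪u2 j, z⟫ = 0 := by
        intro j
        have hq := hvanQ z hzW j
        rw [inner_add_left, c1 j, zero_add] at hq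
        exact hq
      refine hzero z (hMBle hzB) ?_
      rintro (i | i)
      · exact c1 i
      · exact c2 i
    -- A and B are inside the closure of VV ⊔ WW
    have hplusmem : ∀ i, u1 i + u2 i ∈ VV.1 := fun i =>
      Submodule.le_topologicalClosure _ (Submodule.subset_span ⟨i, rfl⟩)
    have hminusmem : ∀ i, u1 i - u2 i ∈ WW.1 := fun i =>
      Submodule.le_topologicalClosure _ (Submodule.subset_span ⟨i, rfl⟩)
    have hAle : A.1 ≤ (VV.1 ⊔ WW.1).topologicalClosure := by
      refine Submodule.topologicalClosure_minimal _ (Submodule.span_le.2 ?_)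
        (Submodule.isClosed_topologicalClosure _)
      rintro _ ⟨i, rfl⟩
      refine Submodule.le_topologicalClosure _ ?_
      have hadd := Submodule.add_mem_sup (hplusmem i) (hminusmem i)
      have hsm := Submodule.smul_mem (VV.1 ⊔ WW.1) ((2 : ℂ)⁻¹) hadd
      have h2 : ((u1 i + u2 i) + (u1 i - u2 i)) = (2 : ℂ) • u1 i := by module
      rwa [h2, smul_smul, inv_mul_cancel₀ (by norm_num : (2:ℂ) ≠ 0), one_smul] at hsm
    have hBle : B.1 ≤ (VV.1 ⊔ WW.1).topologicalClosure := by
      refine Submodule.topologicalClosure_minimal _ (Submodule.span_le.2 ?_)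
        (Submodule.isClosed_topologicalClosure _)
      rintro _ ⟨i, rfl⟩
      refine Submodule.le_topologicalClosure _ ?_
      have hadd := Submodule.sub_mem (VV.1 ⊔ WW.1)
        (Submodule.mem_sup_left (hplusmem i)) (Submodule.mem_sup_right (hminusmem i))
      have hsm := Submodule.smul_mem (VV.1 ⊔ WW.1) ((2 : ℂ)⁻¹) hadd
      have h2 : ((u1 i + u2 i) - (u1 i - u2 i)) = (2 : ℂ) • u2 i := by module
      rwa [h2, smul_smul, inv_mul_cancel₀ (by norm_num : (2:ℂ) ≠ 0), one_smul] at hsm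
    -- S A and S B are subsingletons
    have hsubA : ∀ (p q : S A), p = q := fun p q =>
      key ρ hglue (hne VV).some (hne WW).some ddVW ddVA ddWA hAle p q
    have hsubB : ∀ (p q : S B), p = q := fun p q =>
      key ρ hglue (hne VV).some (hne WW).some ddVW ddVB ddWB hBle p q
    -- U is the join of A and B
    have hfsU : ClosedSub.famSup (pairFam A B) = U := by
      refine famSup_eq_of_closure (pairFam A B) U ?_
      have h1 : (⨆ bb, ((pairFam A B) bb).1) = MA.topologicalClosure ⊔ MB.topologicalClosure := by
        rw [iSup_bool_eq]; rfl
      rw [h1]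
      have h2 : (MA.topologicalClosure ⊔ MB.topologicalClosure).topologicalClosure
          = (MA ⊔ MB).topologicalClosure := by
        refine le_antisymm ?_ ?_
        · exact Submodule.topologicalClosure_minimal _
            (sup_le (Submodule.topologicalClosure_mono le_sup_left)
              (Submodule.topologicalClosure_mono le_sup_right))
            (Submodule.isClosed_topologicalClosure _)
        · refine Submodule.topologicalClosure_mono ?_
          exact sup_le (le_trans (Submodule.le_topologicalClosure _) le_sup_left)
            (le_trans (Submodule.le_topologicalClosure _) le_sup_right)
      rw [h2]
      have h3 : MA ⊔ MB = Mv := by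
        rw [hMA, hMB, hMv, ← Submodule.span_union, hu1, hu2, ← Sum.range_eq]
      rw [h3]
      -- and the closure of the total span is U
      have hrange : Set.range v = (Subtype.val : U.1 → H) '' Set.range ⇑b := by
        rw [hveq, Set.range_comp, e.surjective.range_comp]
      have h5 : Mv = Submodule.map U.1.subtype (span ℂ (Set.range ⇑b)) := by
        rw [Submodule.map_span, Submodule.coe_subtype, hMv, hrange]
      rw [h5]
      apply SetLike.coe_injective
      rw [Submodule.topologicalClosure_coe, Submodule.map_coe, Submodule.coe_subtype]
      have hce : Topology.IsClosedEmbedding (Subtype.val : U.1 → H) :=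
        Topology.IsClosedEmbedding.subtypeVal U.2
      rw [hce.closure_image_eq]
      have hdense : Dense ((span ℂ (Set.range ⇑b) : Submodule ℂ U.1) : Set U.1) := by
        rw [Submodule.dense_iff_topologicalClosure_eq_top]
        exact hdenseb
      rw [hdense.closure_eq, Set.image_univ, Subtype.range_val]
    have hsub : ∀ bb, ∀ (p q : S (pairFam A B bb)), p = q := by
      intro bb
      cases bb with
      | true => exact hsubA
      | false => exact hsubB
    have := joinP ρ hcomp hglue (pairFam A B) hsub
      (cast (congrArg S hfsU.symm) s) (cast (congrArg S hfsU.symm) t)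
    exact (cast_inj _).1 this

end AuxMain

/-- A complete presheaf of sets on the quantum lattice `L(H)` of a complex Hilbert
space of dimension at least `2`, all of whose sets are nonempty, is trivial:
`S(U)` has exactly one element for every `U ≠ 0`. -/
theorem complete_presheaf_on_quantum_lattice_trivial
    {H : Type*} [NormedAddCommGroup H] [InnerProductSpace ℂ H] [CompleteSpace H]
    (hdim : 2 ≤ Module.rank ℂ H)
    -- a presheaf of sets on `L(H)`:
    (S : ClosedSub H → Type*)
    (ρ : ∀ {U V : ClosedSub H}, V ≤ U → S U → S V)
    (hid : ∀ (U : ClosedSub H) (f : S U), ρ (le_refl U) f = f)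
    (hcomp : ∀ {U V W : ClosedSub H} (hWV : W ≤ V) (hVU : V ≤ U) (f : S U),
      ρ hWV (ρ hVU f) = ρ (hWV.trans hVU) f)
    -- completeness: compatible local data glue uniquely:
    (hglue : ∀ {ι : Type} (a : ι → ClosedSub H) (f : ∀ i, S (a i)),
      (∀ i j : ι, a i ⊓ a j ≠ ⊥ →
        ρ (ClosedSub.inf_le_left' (a i) (a j)) (f i) =
          ρ (ClosedSub.inf_le_right' (a i) (a j)) (f j)) →
      ∃! g : S (ClosedSub.famSup a), ∀ i, ρ (ClosedSub.le_famSup a i) g = f i)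
    -- every `S(U)` is nonempty:
    (hne : ∀ U : ClosedSub H, Nonempty (S U)) :
    ∀ U : ClosedSub H, U ≠ ⊥ → ∃ f : S U, ∀ g : S U, g = f := by
  intro U hU
  obtain ⟨f⟩ := hne U
  exact ⟨f, fun g => subsing ρ hdim @hcomp @hglue hne U g f⟩
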